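/- Let N ⊆ M be a Frobenius extension with Frobenius structure (ψ, Σᵢ uᵢ ⊗ vᵢ), and let βᵢ, γᵢ ∈ End(_N M_N) and bᵢ, cᵢ ∈ (M ⊗_N M)^N be related by bᵢ = Σⱼ uⱼ ⊗ γᵢ(vⱼ) and cᵢ = Σⱼ βᵢ(uⱼ) ⊗ vⱼ. Then the following are equivalent: (i) Σᵢ bᵢ¹ ⊗ bᵢ² βᵢ(m) = m ⊗ 1 in M ⊗_N M for all m; (ii) Σᵢ γᵢ(m) cᵢ¹ ⊗ cᵢ² = 1 ⊗ m in M ⊗_N M for all m; (iii) Σᵢ γᵢ(m) βᵢ(m') = ψ(m m') for all m, m' ∈ M; (iv) Σᵢ bᵢ¹ ⊗ bᵢ² cᵢ¹ ⊗ cᵢ² = Σₖ uₖ ⊗ 1 ⊗ vₖ in M ⊗_N M ⊗_N M. -/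

import Mathlib

open scoped TensorProduct

namespace Frob

variable {N M : Type*} [Ring N] [Ring M]

/-- A Frobenius system for a ring extension `ι : N →+* M`:
an `N`-`N`-bimodule map `ψ : M → N` together with a quasibasis `∑ i, u i ⊗ v i`. -/
structure FrobeniusData (ι : N →+* M) where
  ψ : M →+ N
  ψ_left : ∀ (n : N) (m : M), ψ (ι n * m) = n * ψ m
  ψ_right : ∀ (m : M) (n : N), ψ (m * ι n) = ψ m * n
  k : ℕ
  u : Fin k → M
  v : Fin k → M
  quasi_left : ∀ m : M, ∑ i, ι (ψ (m * u i)) * v i = m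
  quasi_right : ∀ m : M, ∑ i, u i * ι (ψ (v i * m)) = m

/-- `N`-`N`-bimodule endomorphism of `M`. -/
def IsBimodEnd (ι : N →+* M) (α : M →+ M) : Prop :=
  (∀ n m, α (ι n * m) = ι n * α m) ∧ (∀ m n, α (m * ι n) = α m * ι n)

variable {ι : N →+* M}

/-- The antipode `S_A(α)(m') = ∑ i, u i * ι (ψ (α (v i) * m'))`. -/
noncomputable def SA (D : FrobeniusData ι) (α : M →+ M) : M →+ M :=
  AddMonoidHom.mk' (fun m' => ∑ i, D.u i * ι (D.ψ (α (D.v i) * m')))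
    (by intro x y; simp [mul_add, map_add, Finset.sum_add_distrib])

/-- The inverse antipode `S_A⁻¹(α)(m') = ∑ i, ι (ψ (m' * α (u i))) * v i`. -/
noncomputable def SAinv (D : FrobeniusData ι) (α : M →+ M) : M →+ M :=
  AddMonoidHom.mk' (fun m' => ∑ i, ι (D.ψ (m' * α (D.u i))) * D.v i)
    (by intro x y; simp [add_mul, map_add, Finset.sum_add_distrib])

/-- The subgroup of `M ⊗[ℤ] M` by which one quotients to obtain `M ⊗_N M`. -/
def relN (ι : N →+* M) : Submodule ℤ (M ⊗[ℤ] M) :=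
  Submodule.span ℤ
    {x | ∃ (n : N) (a b : M), x = (a * ι n) ⊗ₜ[ℤ] b - a ⊗ₜ[ℤ] (ι n * b)}

/-- The subgroup of `M ⊗[ℤ] M ⊗[ℤ] M` by which one quotients to obtain `M ⊗_N M ⊗_N M`. -/
def relN3 (ι : N →+* M) : Submodule ℤ (M ⊗[ℤ] (M ⊗[ℤ] M)) :=
  Submodule.span ℤ
    ({x | ∃ (n : N) (a b c : M),
        x = (a * ι n) ⊗ₜ[ℤ] (b ⊗ₜ[ℤ] c) - a ⊗ₜ[ℤ] ((ι n * b) ⊗ₜ[ℤ] c)} ∪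
     {x | ∃ (n : N) (a b c : M),
        x = a ⊗ₜ[ℤ] ((b * ι n) ⊗ₜ[ℤ] c) - a ⊗ₜ[ℤ] (b ⊗ₜ[ℤ] (ι n * c))})

/-- The Nakayama map `ν(c) = ∑ i, ψ(u i * c) * v i` on the centralizer. -/
noncomputable def nakayama (D : FrobeniusData ι) (c : M) : M :=
  ∑ i, ι (D.ψ (D.u i * c)) * D.v i

/-- The centralizer `C_M(N)`. -/
def centralizer (ι : N →+* M) : Set M := {c : M | ∀ n : N, c * ι n = ι n * c}

/-- The Fourier transform `F(α) = ∑ i, u i ⊗ α (v i)` (a representative in `M ⊗[ℤ] M`). -/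
noncomputable def Ftr (D : FrobeniusData ι) (α : M →+ M) : M ⊗[ℤ] M :=
  ∑ i, D.u i ⊗ₜ[ℤ] α (D.v i)

/-- The inverse Fourier transform evaluated on a representative:
`F⁻¹(b¹ ⊗ b²)(m) = ψ(m * b¹) * b²`. -/
noncomputable def FinvEval (D : FrobeniusData ι) (x : M ⊗[ℤ] M) (m : M) : M :=
  LinearMap.mul' ℤ M
    ((LinearMap.rTensor M
      ((ι.toAddMonoidHom.comp (D.ψ.comp (AddMonoidHom.mulLeft m))).toIntLinearMap)) x)

end Frob

namespace Frob
variable {N M : Type*} [Ring N] [Ring M] {ι : N →+* M}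

/-- `F⁻¹(x)` as an additive endomorphism of `M`. -/
noncomputable def FinvHom (D : FrobeniusData ι) (x : M ⊗[ℤ] M) : M →+ M :=
  AddMonoidHom.mk' (fun m => FinvEval D x m) (by
    intro a b
    induction x using TensorProduct.induction_on with
    | zero => simp [FinvEval]
    | tmul p q => simp [FinvEval, add_mul, map_add]
    | add u v hu hv =>
        simp only [FinvEval, map_add] at hu hv ⊢
        rw [hu, hv]; abel)
end Frob
namespace Frob
variable {N M : Type*} [Ring N] [Ring M] {ι : N →+* M}

/-- `a ⊗ b ↦ ψ(m' a) b`, kills `relN`. -/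
noncomputable def Phi (D : FrobeniusData ι) (m' : M) : M ⊗[ℤ] M →ₗ[ℤ] M :=
  TensorProduct.lift (LinearMap.mk₂ ℤ (fun a b => ι (D.ψ (m' * a)) * b)
    (fun a a' b => by simp [mul_add, map_add, add_mul])
    (fun z a b => by rw [mul_smul_comm, map_zsmul, map_zsmul, smul_mul_assoc])
    (fun a b b' => by simp [mul_add])
    (fun z a b => by rw [mul_smul_comm]))

@[simp] lemma Phi_tmul (D : FrobeniusData ι) (m' a b : M) :
    Phi D m' (a ⊗ₜ[ℤ] b) = ι (D.ψ (m' * a)) * b := rfl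

lemma Phi_vanish (D : FrobeniusData ι) (m' : M) {x : M ⊗[ℤ] M} (hx : x ∈ relN ι) :
    Phi D m' x = 0 := by
  refine (Submodule.span_le.2 ?_ : relN ι ≤ LinearMap.ker (Phi D m')) hx
  rintro x ⟨n, a, b, rfl⟩
  simp only [SetLike.mem_coe, LinearMap.mem_ker, map_sub, Phi_tmul]
  rw [← mul_assoc, D.ψ_right, ι.map_mul, mul_assoc, sub_self]

/-- `a ⊗ b ↦ a ψ(b m'')`, kills `relN`. -/
noncomputable def Psi (D : FrobeniusData ι) (m'' : M) : M ⊗[ℤ] M →ₗ[ℤ] M :=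
  TensorProduct.lift (LinearMap.mk₂ ℤ (fun a b => a * ι (D.ψ (b * m'')))
    (fun a a' b => by simp [add_mul])
    (fun z a b => by rw [smul_mul_assoc])
    (fun a b b' => by simp [add_mul, map_add, mul_add])
    (fun z a b => by rw [smul_mul_assoc, map_zsmul, map_zsmul, mul_smul_comm]))

@[simp] lemma Psi_tmul (D : FrobeniusData ι) (m'' a b : M) :
    Psi D m'' (a ⊗ₜ[ℤ] b) = a * ι (D.ψ (b * m'')) := rfl

lemma Psi_vanish (D : FrobeniusData ι) (m'' : M) {x : M ⊗[ℤ] M} (hx : x ∈ relN ι) :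
    Psi D m'' x = 0 := by
  refine (Submodule.span_le.2 ?_ : relN ι ≤ LinearMap.ker (Psi D m'')) hx
  rintro x ⟨n, a, b, rfl⟩
  simp only [SetLike.mem_coe, LinearMap.mem_ker, map_sub, Psi_tmul]
  rw [mul_assoc (ι n) b m'', D.ψ_left, ι.map_mul, ← mul_assoc a (ι n), sub_self]

/-- `a ⊗ (b ⊗ c) ↦ ψ(m a) b ψ(c m')`, kills `relN3`. -/
noncomputable def Theta (D : FrobeniusData ι) (m m' : M) : M ⊗[ℤ] (M ⊗[ℤ] M) →ₗ[ℤ] M :=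
  TensorProduct.lift (LinearMap.mk₂ ℤ (fun a y => ι (D.ψ (m * a)) * Psi D m' y)
    (fun a a' y => by simp [mul_add, map_add, add_mul])
    (fun z a y => by rw [mul_smul_comm, map_zsmul, map_zsmul, smul_mul_assoc])
    (fun a y y' => by simp [mul_add])
    (fun z a y => by rw [map_smul, mul_smul_comm]))

@[simp] lemma Theta_tmul (D : FrobeniusData ι) (m m' a b c : M) :
    Theta D m m' (a ⊗ₜ[ℤ] (b ⊗ₜ[ℤ] c)) = ι (D.ψ (m * a)) * (b * ι (D.ψ (c * m'))) := rfl

lemma Theta_vanish (D : FrobeniusData ι) (m m' : M) {x : M ⊗[ℤ] (M ⊗[ℤ] M)}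
    (hx : x ∈ relN3 ι) : Theta D m m' x = 0 := by
  refine (Submodule.span_le.2 ?_ : relN3 ι ≤ LinearMap.ker (Theta D m m')) hx
  rintro x (⟨n, a, b, c, rfl⟩ | ⟨n, a, b, c, rfl⟩) <;>
    simp only [SetLike.mem_coe, LinearMap.mem_ker, map_sub, Theta_tmul]
  · rw [← mul_assoc m a (ι n), D.ψ_right, ι.map_mul,
      mul_assoc (ι (D.ψ (m * a))) (ι n), mul_assoc (ι n) b, sub_self]
  · rw [mul_assoc (ι n) c m', D.ψ_left, ι.map_mul, ← mul_assoc b (ι n), sub_self]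

end Frob

namespace Frob
variable {N M : Type*} [Ring N] [Ring M] {ι : N →+* M}

section Main
variable (D : FrobeniusData ι) {n : ℕ} (β γ : Fin n → (M →+ M))

lemma iii_to_i (h : ∀ m m' : M, ∑ i, γ i m * β i m' = ι (D.ψ (m * m'))) (m : M) :
    (∑ i, ∑ j, D.u j ⊗ₜ[ℤ] (γ i (D.v j) * β i m)) - m ⊗ₜ[ℤ] (1 : M) ∈ relN ι := by
  have h1 : (∑ i, ∑ j, D.u j ⊗ₜ[ℤ] (γ i (D.v j) * β i m))
      = ∑ j, D.u j ⊗ₜ[ℤ] (ι (D.ψ (D.v j * m))) := by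
    rw [Finset.sum_comm]
    exact Finset.sum_congr rfl fun j _ => by
      rw [← TensorProduct.tmul_sum, h (D.v j) m]
  have h2 : m ⊗ₜ[ℤ] (1 : M) = ∑ j, (D.u j * ι (D.ψ (D.v j * m))) ⊗ₜ[ℤ] (1 : M) := by
    rw [← TensorProduct.sum_tmul, D.quasi_right]
  rw [h1, h2, ← Finset.sum_sub_distrib]
  refine Submodule.sum_mem _ fun j _ => ?_
  have e : D.u j ⊗ₜ[ℤ] ι (D.ψ (D.v j * m)) - (D.u j * ι (D.ψ (D.v j * m))) ⊗ₜ[ℤ] (1 : M)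
      = -((D.u j * ι (D.ψ (D.v j * m))) ⊗ₜ[ℤ] (1 : M)
          - D.u j ⊗ₜ[ℤ] (ι (D.ψ (D.v j * m)) * 1)) := by
    rw [mul_one]; abel
  rw [e]
  exact Submodule.neg_mem _ (Submodule.subset_span ⟨_, _, _, rfl⟩)

lemma i_to_iii (hγ : ∀ i, IsBimodEnd ι (γ i))
    (h : ∀ m : M,
      (∑ i, ∑ j, D.u j ⊗ₜ[ℤ] (γ i (D.v j) * β i m)) - m ⊗ₜ[ℤ] (1 : M) ∈ relN ι)
    (m m' : M) : ∑ i, γ i m * β i m' = ι (D.ψ (m * m')) := by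
  have h0 := Phi_vanish D m (h m')
  rw [map_sub, sub_eq_zero] at h0
  have h1 : Phi D m (∑ i, ∑ j, D.u j ⊗ₜ[ℤ] (γ i (D.v j) * β i m'))
      = ∑ i, γ i m * β i m' := by
    rw [map_sum]
    refine Finset.sum_congr rfl fun i _ => ?_
    rw [map_sum]
    have e : ∀ j, Phi D m (D.u j ⊗ₜ[ℤ] (γ i (D.v j) * β i m'))
        = γ i (ι (D.ψ (m * D.u j)) * D.v j) * β i m' := fun j => by
      rw [Phi_tmul, (hγ i).1, mul_assoc]
    rw [Finset.sum_congr rfl fun j _ => e j, ← Finset.sum_mul, ← map_sum, D.quasi_left]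
  have h2 : Phi D m (m' ⊗ₜ[ℤ] (1 : M)) = ι (D.ψ (m * m')) := by
    rw [Phi_tmul, mul_one]
  rw [h1, h2] at h0
  exact h0

lemma iii_to_ii (h : ∀ m m' : M, ∑ i, γ i m * β i m' = ι (D.ψ (m * m'))) (m : M) :
    (∑ i, ∑ j, (γ i m * β i (D.u j)) ⊗ₜ[ℤ] D.v j) - (1 : M) ⊗ₜ[ℤ] m ∈ relN ι := by
  have h1 : (∑ i, ∑ j, (γ i m * β i (D.u j)) ⊗ₜ[ℤ] D.v j)
      = ∑ j, (ι (D.ψ (m * D.u j))) ⊗ₜ[ℤ] D.v j := by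
    rw [Finset.sum_comm]
    exact Finset.sum_congr rfl fun j _ => by
      rw [← TensorProduct.sum_tmul, h m (D.u j)]
  have h2 : (1 : M) ⊗ₜ[ℤ] m = ∑ j, (1 : M) ⊗ₜ[ℤ] (ι (D.ψ (m * D.u j)) * D.v j) := by
    rw [← TensorProduct.tmul_sum, D.quasi_left]
  rw [h1, h2, ← Finset.sum_sub_distrib]
  refine Submodule.sum_mem _ fun j _ => ?_
  refine Submodule.subset_span ⟨D.ψ (m * D.u j), 1, D.v j, ?_⟩
  rw [one_mul]

lemma ii_to_iii (hβ : ∀ i, IsBimodEnd ι (β i))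
    (h : ∀ m : M,
      (∑ i, ∑ j, (γ i m * β i (D.u j)) ⊗ₜ[ℤ] D.v j) - (1 : M) ⊗ₜ[ℤ] m ∈ relN ι)
    (m m' : M) : ∑ i, γ i m * β i m' = ι (D.ψ (m * m')) := by
  have h0 := Psi_vanish D m' (h m)
  rw [map_sub, sub_eq_zero] at h0
  have h1 : Psi D m' (∑ i, ∑ j, (γ i m * β i (D.u j)) ⊗ₜ[ℤ] D.v j)
      = ∑ i, γ i m * β i m' := by
    rw [map_sum]
    refine Finset.sum_congr rfl fun i _ => ?_
    rw [map_sum]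
    have e : ∀ j, Psi D m' ((γ i m * β i (D.u j)) ⊗ₜ[ℤ] D.v j)
        = γ i m * β i (D.u j * ι (D.ψ (D.v j * m'))) := fun j => by
      rw [Psi_tmul, (hβ i).2, mul_assoc]
    rw [Finset.sum_congr rfl fun j _ => e j, ← Finset.mul_sum, ← map_sum, D.quasi_right]
  have h2 : Psi D m' ((1 : M) ⊗ₜ[ℤ] m) = ι (D.ψ (m * m')) := by
    rw [Psi_tmul, one_mul]
  rw [h1, h2] at h0
  exact h0

lemma iii_to_iv (h : ∀ m m' : M, ∑ i, γ i m * β i m' = ι (D.ψ (m * m'))) :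
    (∑ i, ∑ j, ∑ p, D.u j ⊗ₜ[ℤ] ((γ i (D.v j) * β i (D.u p)) ⊗ₜ[ℤ] D.v p))
      - (∑ p, D.u p ⊗ₜ[ℤ] ((1 : M) ⊗ₜ[ℤ] D.v p)) ∈ relN3 ι := by
  have h1 : (∑ i, ∑ j, ∑ p, D.u j ⊗ₜ[ℤ] ((γ i (D.v j) * β i (D.u p)) ⊗ₜ[ℤ] D.v p))
      = ∑ j, ∑ p, D.u j ⊗ₜ[ℤ] ((ι (D.ψ (D.v j * D.u p))) ⊗ₜ[ℤ] D.v p) := by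
    rw [Finset.sum_comm]
    refine Finset.sum_congr rfl fun j _ => ?_
    rw [Finset.sum_comm]
    refine Finset.sum_congr rfl fun p _ => ?_
    rw [← h (D.v j) (D.u p), TensorProduct.sum_tmul, TensorProduct.tmul_sum]
  have h2 : (∑ p, D.u p ⊗ₜ[ℤ] ((1 : M) ⊗ₜ[ℤ] D.v p))
      = ∑ j, ∑ p, D.u j ⊗ₜ[ℤ] ((1 : M) ⊗ₜ[ℤ] (ι (D.ψ (D.v j * D.u p)) * D.v p)) := by
    refine Finset.sum_congr rfl fun j _ => ?_
    rw [← TensorProduct.tmul_sum, ← TensorProduct.tmul_sum, D.quasi_left]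
  rw [h1, h2, ← Finset.sum_sub_distrib]
  refine Submodule.sum_mem _ fun j _ => ?_
  rw [← Finset.sum_sub_distrib]
  refine Submodule.sum_mem _ fun p _ => ?_
  refine Submodule.subset_span (Or.inr ⟨D.ψ (D.v j * D.u p), D.u j, 1, D.v p, ?_⟩)
  rw [one_mul]

lemma iv_to_iii (hβ : ∀ i, IsBimodEnd ι (β i)) (hγ : ∀ i, IsBimodEnd ι (γ i))
    (h : (∑ i, ∑ j, ∑ p, D.u j ⊗ₜ[ℤ] ((γ i (D.v j) * β i (D.u p)) ⊗ₜ[ℤ] D.v p))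
      - (∑ p, D.u p ⊗ₜ[ℤ] ((1 : M) ⊗ₜ[ℤ] D.v p)) ∈ relN3 ι)
    (m m' : M) : ∑ i, γ i m * β i m' = ι (D.ψ (m * m')) := by
  have h0 := Theta_vanish D m m' h
  rw [map_sub, sub_eq_zero] at h0
  have h1 : Theta D m m'
        (∑ i, ∑ j, ∑ p, D.u j ⊗ₜ[ℤ] ((γ i (D.v j) * β i (D.u p)) ⊗ₜ[ℤ] D.v p))
      = ∑ i, γ i m * β i m' := by
    rw [map_sum]
    refine Finset.sum_congr rfl fun i _ => ?_
    rw [map_sum]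
    have e : ∀ j, (∑ p, Theta D m m' (D.u j ⊗ₜ[ℤ] ((γ i (D.v j) * β i (D.u p)) ⊗ₜ[ℤ] D.v p)))
        = γ i (ι (D.ψ (m * D.u j)) * D.v j) * β i m' := by
      intro j
      have e2 : ∀ p, Theta D m m' (D.u j ⊗ₜ[ℤ] ((γ i (D.v j) * β i (D.u p)) ⊗ₜ[ℤ] D.v p))
          = (ι (D.ψ (m * D.u j)) * γ i (D.v j)) * β i (D.u p * ι (D.ψ (D.v p * m'))) := by
        intro p
        rw [Theta_tmul, (hβ i).2, mul_assoc (γ i (D.v j)), ← mul_assoc]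
      rw [Finset.sum_congr rfl fun p _ => e2 p, ← Finset.mul_sum, ← map_sum, D.quasi_right,
        ← (hγ i).1]
    have e1 : ∀ j, Theta D m m'
          (∑ p, D.u j ⊗ₜ[ℤ] ((γ i (D.v j) * β i (D.u p)) ⊗ₜ[ℤ] D.v p))
        = γ i (ι (D.ψ (m * D.u j)) * D.v j) * β i m' := fun j => by
      rw [map_sum]; exact e j
    rw [Finset.sum_congr rfl fun j _ => e1 j, ← Finset.sum_mul, ← map_sum, D.quasi_left]
  have h2 : Theta D m m' (∑ p, D.u p ⊗ₜ[ℤ] ((1 : M) ⊗ₜ[ℤ] D.v p)) = ι (D.ψ (m * m')) := by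
    rw [map_sum]
    have e : ∀ p, Theta D m m' (D.u p ⊗ₜ[ℤ] ((1 : M) ⊗ₜ[ℤ] D.v p))
        = ι (D.ψ ((ι (D.ψ (m * D.u p)) * D.v p) * m')) := by
      intro p
      rw [Theta_tmul, one_mul, ← ι.map_mul, ← D.ψ_left, ← mul_assoc]
    rw [Finset.sum_congr rfl fun p _ => e p, ← map_sum, ← map_sum, ← Finset.sum_mul,
      D.quasi_left]
  rw [h1, h2] at h0
  exact h0

end Main
end Frob

/-- (Lemma 3.1 of Böhm–Szlachányi.)  For a Frobenius extension with
Frobenius structure `(ψ, ∑ i, u i ⊗ v i)` and families `β i, γ i ∈ End(_N M _N)` with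
`b i = ∑ j, u j ⊗ γ i (v j)` and `c i = ∑ j, β i (u j) ⊗ v j`, the four depth-2 conditions
(i)–(iv) are equivalent. -/
theorem statement4 {N M : Type*} [Ring N] [Ring M] (ι : N →+* M)
    (D : Frob.FrobeniusData ι) (n : ℕ) (β γ : Fin n → (M →+ M))
    (hβ : ∀ i, Frob.IsBimodEnd ι (β i)) (hγ : ∀ i, Frob.IsBimodEnd ι (γ i)) :
    -- (i) ∑ i, b i¹ ⊗ b i² β i (m) = m ⊗ 1
    ((∀ m : M,
        (∑ i, ∑ j, D.u j ⊗ₜ[ℤ] (γ i (D.v j) * β i m)) - m ⊗ₜ[ℤ] (1 : M) ∈ Frob.relN ι) ↔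
    -- (ii) ∑ i, γ i (m) c i¹ ⊗ c i² = 1 ⊗ m
     (∀ m : M,
        (∑ i, ∑ j, (γ i m * β i (D.u j)) ⊗ₜ[ℤ] D.v j) - (1 : M) ⊗ₜ[ℤ] m ∈ Frob.relN ι)) ∧
    ((∀ m : M,
        (∑ i, ∑ j, D.u j ⊗ₜ[ℤ] (γ i (D.v j) * β i m)) - m ⊗ₜ[ℤ] (1 : M) ∈ Frob.relN ι) ↔
    -- (iii) ∑ i, γ i (m) * β i (m') = ψ (m m')
     (∀ m m' : M, ∑ i, γ i m * β i m' = ι (D.ψ (m * m')))) ∧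
    ((∀ m : M,
        (∑ i, ∑ j, D.u j ⊗ₜ[ℤ] (γ i (D.v j) * β i m)) - m ⊗ₜ[ℤ] (1 : M) ∈ Frob.relN ι) ↔
    -- (iv) ∑ i, b i¹ ⊗ b i² c i¹ ⊗ c i² = ∑ p, u p ⊗ 1 ⊗ v p
     ((∑ i, ∑ j, ∑ p, D.u j ⊗ₜ[ℤ] ((γ i (D.v j) * β i (D.u p)) ⊗ₜ[ℤ] D.v p))
        - (∑ p, D.u p ⊗ₜ[ℤ] ((1 : M) ⊗ₜ[ℤ] D.v p)) ∈ Frob.relN3 ι)) := by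
  exact ⟨⟨fun h m => Frob.iii_to_ii D β γ (Frob.i_to_iii D β γ hγ h) m,
          fun h m => Frob.iii_to_i D β γ (Frob.ii_to_iii D β γ hβ h) m⟩,
        ⟨Frob.i_to_iii D β γ hγ, fun h m => Frob.iii_to_i D β γ h m⟩,
        ⟨fun h => Frob.iii_to_iv D β γ (Frob.i_to_iii D β γ hγ h),
         fun h m => Frob.iii_to_i D β γ (Frob.iv_to_iii D β γ hβ hγ h) m⟩⟩
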